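/- Suppose g : E → ℝ → E is uniformly ℓ-Lipschitz with respect to ‖·‖_P (i.e. ‖g x t − g y t‖_P ≤ ℓ·‖x − y‖_P for all x, y ∈ E, t ≥ 0) and satisfies the one-sided Lipschitz condition with constant rate γ (with respect to ‖·‖_P) on [0, ∞), where 0 < γ < ℓ. Let 0 < h < 2·γ/ℓ², let x* : ℝ → E satisfy g (x* t) t = 0 for all t ≥ 0 and ‖x* (k·h) − x* ((k−1)·h)‖_P ≤ ρ for all k ≥ 1, where ρ ≥ 0, and let y : ℕ → E satisfy the explicit Euler recursion y (k+1) = y k + h • g (y k) (k·h) for all k. Then for every k ≥ 1, ‖y k − x* (k·h)‖_P ≤ (1 − 2·h·γ + h²·ℓ²)^(k/2) · ‖y 0 − x* 0‖_P + ρ · ∑_{m=0}^{k−1} (1 − 2·h·γ + h²·ℓ²)^(m/2), and moreover limsup_{k→∞} ‖y k − x* (k·h)‖_P ≤ ρ/(1 − (1 − 2·h·γ + h²·ℓ²)^(1/2)). -/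

import Mathlib

open Finset Filter

/-- Weighted inner product `⟪u, P.mulVec v⟫` on Euclidean space. -/
noncomputable def wip {n : ℕ} (P : Matrix (Fin n) (Fin n) ℝ)
    (u v : EuclideanSpace ℝ (Fin n)) : ℝ :=
  ∑ i, u i * P.mulVec (fun j => v j) i

/-- Weighted norm `‖u‖_P = √⟪u, u⟫_P`. -/
noncomputable def wnorm {n : ℕ} (P : Matrix (Fin n) (Fin n) ℝ)
    (u : EuclideanSpace ℝ (Fin n)) : ℝ :=
  Real.sqrt (wip P u u)

variable {n : ℕ} (P : Matrix (Fin n) (Fin n) ℝ)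

lemma wip_expand (u v : EuclideanSpace ℝ (Fin n)) :
    wip P u v = ∑ i, ∑ j, u i * P i j * v j := by
  simp [wip, Matrix.mulVec, dotProduct, Finset.mul_sum, mul_assoc]

lemma wip_nonneg (hP : P.PosDef) (u : EuclideanSpace ℝ (Fin n)) :
    0 ≤ wip P u u := by
  have := hP.posSemidef.dotProduct_mulVec_nonneg (fun i => u i)
  simpa [wip, dotProduct] using this

lemma wip_symm (hP : P.IsSymm) (u v : EuclideanSpace ℝ (Fin n)) :
    wip P u v = wip P v u := by
  rw [wip_expand, wip_expand, Finset.sum_comm]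
  refine Finset.sum_congr rfl fun i _ => Finset.sum_congr rfl fun j _ => ?_
  rw [← hP.apply i j]
  ring

lemma wip_add_left (u w v : EuclideanSpace ℝ (Fin n)) :
    wip P (u + w) v = wip P u v + wip P w v := by
  simp [wip_expand, add_mul, Finset.sum_add_distrib]

lemma wip_add_right (u v w : EuclideanSpace ℝ (Fin n)) :
    wip P u (v + w) = wip P u v + wip P u w := by
  simp [wip_expand, mul_add, Finset.sum_add_distrib]

lemma wip_smul_left (c : ℝ) (u v : EuclideanSpace ℝ (Fin n)) :
    wip P (c • u) v = c * wip P u v := by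
  simp [wip_expand, Finset.mul_sum, mul_assoc]

lemma wip_smul_right (c : ℝ) (u v : EuclideanSpace ℝ (Fin n)) :
    wip P u (c • v) = c * wip P u v := by
  simp [wip_expand, Finset.mul_sum]; refine Finset.sum_congr rfl fun i _ => Finset.sum_congr rfl fun j _ => by ring

lemma wnorm_nonneg (u : EuclideanSpace ℝ (Fin n)) : 0 ≤ wnorm P u :=
  Real.sqrt_nonneg _

lemma wnorm_sq (hP : P.PosDef) (u : EuclideanSpace ℝ (Fin n)) :
    wnorm P u ^ 2 = wip P u u := Real.sq_sqrt (wip_nonneg P hP u)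

lemma wip_cs (hS : P.IsSymm) (hP : P.PosDef) (u v : EuclideanSpace ℝ (Fin n)) :
    wip P u v ≤ wnorm P u * wnorm P v := by
  have key : discrim (wip P v v) (2 * wip P u v) (wip P u u) ≤ 0 := by
    apply discrim_le_zero
    intro t
    have h0 := wip_nonneg P hP (u + t • v)
    have e : wip P (u + t • v) (u + t • v)
        = wip P v v * t ^ 2 + 2 * wip P u v * t + wip P u u := by
      rw [wip_add_left, wip_add_right, wip_add_right, wip_smul_left, wip_smul_left,
        wip_smul_right, wip_smul_right, wip_symm P hS v u]
      ring
    linarith [e ▸ h0]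
  rw [discrim] at key
  have h1 : (wip P u v) ^ 2 ≤ (wnorm P u * wnorm P v) ^ 2 := by
    rw [mul_pow, wnorm_sq P hP, wnorm_sq P hP]
    nlinarith
  nlinarith [h1, mul_nonneg (wnorm_nonneg P u) (wnorm_nonneg P v)]

lemma wnorm_add_le (hS : P.IsSymm) (hP : P.PosDef) (u v : EuclideanSpace ℝ (Fin n)) :
    wnorm P (u + v) ≤ wnorm P u + wnorm P v := by
  have h1 : wip P (u + v) (u + v) ≤ (wnorm P u + wnorm P v) ^ 2 := by
    rw [wip_add_left, wip_add_right, wip_add_right]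
    have cs := wip_cs P hS hP u v
    have e1 := wnorm_sq P hP u
    have e2 := wnorm_sq P hP v
    have := wip_symm P hS u v
    nlinarith
  calc wnorm P (u + v) = Real.sqrt (wip P (u+v) (u+v)) := rfl
    _ ≤ Real.sqrt ((wnorm P u + wnorm P v) ^ 2) := Real.sqrt_le_sqrt h1
    _ = wnorm P u + wnorm P v := Real.sqrt_sq (add_nonneg (wnorm_nonneg P u) (wnorm_nonneg P v))

lemma wnorm_sub_comm (u v : EuclideanSpace ℝ (Fin n)) :
    wnorm P (u - v) = wnorm P (v - u) := by
  have : wip P (u - v) (u - v) = wip P (v - u) (v - u) := by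
    simp [wip_expand]
    refine Finset.sum_congr rfl fun i _ => Finset.sum_congr rfl fun j _ => by ring
  rw [wnorm, wnorm, this]

theorem stmt_8 {n : ℕ} (P : Matrix (Fin n) (Fin n) ℝ)
    (hPsymm : P.IsSymm) (hPpos : P.PosDef)
    (g : EuclideanSpace ℝ (Fin n) → ℝ → EuclideanSpace ℝ (Fin n))
    (ℓ γ : ℝ)
    (hLip : ∀ x y : EuclideanSpace ℝ (Fin n), ∀ t : ℝ, 0 ≤ t →
      wnorm P (g x t - g y t) ≤ ℓ * wnorm P (x - y))
    (hOSL : ∀ x y : EuclideanSpace ℝ (Fin n), ∀ t : ℝ, 0 ≤ t →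
      wip P (x - y) (g x t - g y t) ≤ -γ * (wnorm P (x - y)) ^ 2)
    (hγ : 0 < γ) (hγℓ : γ < ℓ)
    (h : ℝ) (hh : 0 < h) (hh2 : h < 2 * γ / ℓ ^ 2)
    (xs : ℝ → EuclideanSpace ℝ (Fin n)) (hxs : ∀ t : ℝ, 0 ≤ t → g (xs t) t = 0)
    (ρ : ℝ) (hρ : 0 ≤ ρ)
    (hxsmove : ∀ k : ℕ, 1 ≤ k →
      wnorm P (xs ((k : ℝ) * h) - xs (((k : ℝ) - 1) * h)) ≤ ρ)
    (y : ℕ → EuclideanSpace ℝ (Fin n))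
    (hy : ∀ k : ℕ, y (k + 1) = y k + h • g (y k) ((k : ℝ) * h)) :
    (∀ k : ℕ, 1 ≤ k →
      wnorm P (y k - xs ((k : ℝ) * h)) ≤
        Real.sqrt (1 - 2 * h * γ + h ^ 2 * ℓ ^ 2) ^ k * wnorm P (y 0 - xs 0) +
          ρ * ∑ m ∈ Finset.range k, Real.sqrt (1 - 2 * h * γ + h ^ 2 * ℓ ^ 2) ^ m) ∧
    limsup (fun k : ℕ => wnorm P (y k - xs ((k : ℝ) * h))) atTop ≤
      ρ / (1 - Real.sqrt (1 - 2 * h * γ + h ^ 2 * ℓ ^ 2)) := by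
  have hℓ : 0 < ℓ := hγ.trans hγℓ
  set q : ℝ := 1 - 2 * h * γ + h ^ 2 * ℓ ^ 2 with hqdef
  set c : ℝ := Real.sqrt q with hcdef
  have hq0 : 0 < q := by nlinarith [sq_nonneg (1 - h * ℓ)]
  have hq1 : q < 1 := by
    have h2 : h * ℓ ^ 2 < 2 * γ := by
      rw [div_eq_mul_inv] at hh2
      calc h * ℓ ^ 2 < (2 * γ * (ℓ^2)⁻¹) * ℓ ^ 2 := by
            apply mul_lt_mul_of_pos_right hh2 (by positivity)
        _ = 2 * γ := by field_simp
    nlinarith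
  have hc0 : 0 ≤ c := Real.sqrt_nonneg _
  have hc1 : c < 1 := by
    rw [hcdef, show (1:ℝ) = Real.sqrt 1 by simp]
    exact Real.sqrt_lt_sqrt hq0.le hq1
  -- one-step contraction
  have step : ∀ k : ℕ, wnorm P (y (k + 1) - xs ((k : ℝ) * h)) ≤
      c * wnorm P (y k - xs ((k : ℝ) * h)) := by
    intro k
    set t : ℝ := (k : ℝ) * h with htdef
    have ht : 0 ≤ t := by positivity
    set d : EuclideanSpace ℝ (Fin n) := y k - xs t with hd
    set Δ : EuclideanSpace ℝ (Fin n) := g (y k) t - g (xs t) t with hΔ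
    have heq : y (k + 1) - xs t = d + h • Δ := by
      rw [hy k, ← htdef, hΔ, hd, hxs t ht, sub_zero, add_sub_right_comm]
    have hosl := hOSL (y k) (xs t) t ht
    have hlip := hLip (y k) (xs t) t ht
    have hΔsq : wip P Δ Δ ≤ ℓ ^ 2 * wnorm P d ^ 2 := by
      have h2 : wnorm P Δ * wnorm P Δ
          ≤ (ℓ * wnorm P d) * (ℓ * wnorm P d) := by
        rw [hΔ, hd]
        exact mul_self_le_mul_self (wnorm_nonneg P _) hlip
      calc wip P Δ Δ = wnorm P Δ * wnorm P Δ := by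
            rw [wnorm, Real.mul_self_sqrt (wip_nonneg P hPpos Δ)]
        _ ≤ ℓ * wnorm P d * (ℓ * wnorm P d) := h2
        _ = ℓ ^ 2 * wnorm P d ^ 2 := by ring
    have hexp : wip P (d + h • Δ) (d + h • Δ)
        = wip P d d + 2 * h * wip P d Δ + h ^ 2 * wip P Δ Δ := by
      rw [wip_add_left, wip_add_right, wip_add_right, wip_smul_left, wip_smul_left,
        wip_smul_right, wip_smul_right, wip_symm P hPsymm Δ d]
      ring
    have hdd : wip P d d = wnorm P d ^ 2 := (wnorm_sq P hPpos d).symm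
    have hosl' : wip P d Δ ≤ -γ * wnorm P d ^ 2 := by rw [hd, hΔ]; exact hosl
    have hbound : wip P (d + h • Δ) (d + h • Δ) ≤ q * wnorm P d ^ 2 := by
      rw [hexp, hdd, hqdef]
      nlinarith [hosl', hΔsq, hh.le]
    calc wnorm P (y (k + 1) - xs t) = Real.sqrt (wip P (d + h • Δ) (d + h • Δ)) := by
          rw [heq]; rfl
      _ ≤ Real.sqrt (q * wnorm P d ^ 2) := Real.sqrt_le_sqrt hbound
      _ = c * wnorm P d := by
          rw [Real.sqrt_mul hq0.le, Real.sqrt_sq (wnorm_nonneg P d), hcdef]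
  -- main recursive bound
  have B : ∀ k : ℕ, wnorm P (y k - xs ((k : ℝ) * h)) ≤
      c ^ k * wnorm P (y 0 - xs 0) + ρ * ∑ m ∈ Finset.range k, c ^ m := by
    intro k
    induction k with
    | zero => simp
    | succ k ih =>
      have tri : wnorm P (y (k + 1) - xs (((k + 1 : ℕ) : ℝ) * h)) ≤
          wnorm P (y (k + 1) - xs ((k : ℝ) * h)) +
          wnorm P (xs (((k + 1 : ℕ) : ℝ) * h) - xs ((k : ℝ) * h)) := by
        have := wnorm_add_le P hPsymm hPpos (y (k + 1) - xs ((k : ℝ) * h))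
          (xs ((k : ℝ) * h) - xs (((k + 1 : ℕ) : ℝ) * h))
        rw [sub_add_sub_cancel] at this
        rw [wnorm_sub_comm P (xs (((k + 1 : ℕ) : ℝ) * h))]
        exact this
      have hmove : wnorm P (xs (((k + 1 : ℕ) : ℝ) * h) - xs ((k : ℝ) * h)) ≤ ρ := by
        have := hxsmove (k + 1) (Nat.le_add_left 1 k)
        have e : (((k + 1 : ℕ) : ℝ) - 1) = (k : ℝ) := by push_cast; ring
        rwa [e] at this
      have hcmul := mul_le_mul_of_nonneg_left ih hc0
      have hgs : ∑ m ∈ Finset.range (k + 1), c ^ m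
          = c * ∑ m ∈ Finset.range k, c ^ m + 1 := geom_sum_succ
      calc wnorm P (y (k + 1) - xs (((k + 1 : ℕ) : ℝ) * h))
          ≤ wnorm P (y (k + 1) - xs ((k : ℝ) * h)) + ρ := by linarith [tri, hmove]
        _ ≤ c * wnorm P (y k - xs ((k : ℝ) * h)) + ρ := by linarith [step k]
        _ ≤ c * (c ^ k * wnorm P (y 0 - xs 0) + ρ * ∑ m ∈ Finset.range k, c ^ m) + ρ := by
            linarith [hcmul]
        _ = c ^ (k + 1) * wnorm P (y 0 - xs 0) +
            ρ * ∑ m ∈ Finset.range (k + 1), c ^ m := by rw [hgs]; ring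
  refine ⟨fun k _ => B k, ?_⟩
  -- limsup part
  have h1c : 0 < 1 - c := by linarith
  have hsumle : ∀ k : ℕ, (∑ m ∈ Finset.range k, c ^ m) ≤ 1 / (1 - c) := by
    intro k
    have e : (c ^ k - 1) / (c - 1) = (1 - c ^ k) / (1 - c) := by
      rw [← neg_div_neg_eq]; ring_nf
    rw [geom_sum_eq (ne_of_lt hc1) k, e, div_le_div_iff₀ h1c h1c]
    nlinarith [mul_nonneg (pow_nonneg hc0 k) h1c.le]
  have hle : ∀ k : ℕ, wnorm P (y k - xs ((k : ℝ) * h)) ≤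
      c ^ k * wnorm P (y 0 - xs 0) + ρ / (1 - c) := by
    intro k
    refine (B k).trans ?_
    have := mul_le_mul_of_nonneg_left (hsumle k) hρ
    rw [div_eq_mul_one_div ρ (1 - c)]
    linarith
  have htend : Tendsto (fun k : ℕ => c ^ k * wnorm P (y 0 - xs 0) + ρ / (1 - c))
      atTop (nhds (ρ / (1 - c))) := by
    have := ((tendsto_pow_atTop_nhds_zero_of_lt_one hc0 hc1).mul_const
      (wnorm P (y 0 - xs 0))).add_const (ρ / (1 - c))
    simpa using this
  calc limsup (fun k : ℕ => wnorm P (y k - xs ((k : ℝ) * h))) atTop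
      ≤ limsup (fun k : ℕ => c ^ k * wnorm P (y 0 - xs 0) + ρ / (1 - c)) atTop := by
        refine limsup_le_limsup (Eventually.of_forall hle) ?_ ?_
        · exact isCoboundedUnder_le_of_le atTop (fun k => wnorm_nonneg P _)
        · exact htend.isBoundedUnder_le
    _ = ρ / (1 - c) := htend.limsup_eq
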